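/- For x ∈ ℝⁿ with entries sorted so that comparisons are on |x_i|, and δ ∈ {0, 1/2, 1}: the vector |x| is weakly sub-majorized by (δ, 1+δ, …, n−1+δ) if and only if for every ℓ ∈ {δ, 1+δ, …, n−1+δ} one has Σ_{i=1}^{n} max(|x_i| − ℓ, 0) ≤ C(n − (ℓ − δ), 2), where C(m,2) = m(m−1)/2. -/

import Mathlib

open Finset

/-- `u` is weakly sub-majorized by `v`. -/
def WeakSubMaj {α β : Type*} [Fintype α] [Fintype β] (u : α → ℝ) (v : β → ℝ) : Prop :=
  ∀ S : Finset α, ∃ T : Finset β, T.card = S.card ∧ ∑ i ∈ S, u i ≤ ∑ j ∈ T, v j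


lemma gauss_max (n j : ℕ) (hj : j < n) :
    ∑ i ∈ Finset.range n, max ((i : ℝ) - (j : ℝ)) 0
      = ((n : ℝ) - (j : ℝ)) * ((n : ℝ) - (j : ℝ) - 1) / 2 := by
  have hjn : j ≤ n := hj.le
  rw [Finset.range_eq_Ico, ← Finset.sum_Ico_consecutive _ (Nat.zero_le j) hjn]
  have h1 : ∑ i ∈ Finset.Ico 0 j, max ((i : ℝ) - (j : ℝ)) 0 = 0 := by
    apply Finset.sum_eq_zero
    intro i hi
    have : (i : ℝ) < (j : ℝ) := by exact_mod_cast (Finset.mem_Ico.mp hi).2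
    simp [max_eq_right, sub_nonpos.mpr this.le]
  have h2 : ∑ i ∈ Finset.Ico j n, max ((i : ℝ) - (j : ℝ)) 0
      = ∑ t ∈ Finset.range (n - j), (t : ℝ) := by
    rw [Finset.sum_Ico_eq_sum_range]
    apply Finset.sum_congr rfl
    intro t _
    have : ((j + t : ℕ) : ℝ) - (j : ℝ) = (t : ℝ) := by push_cast; ring
    rw [this, max_eq_left (by positivity)]
  rw [h1, h2, zero_add]
  have := Finset.sum_range_id_mul_two (n - j)
  have hc : ((n - j : ℕ) : ℝ) = (n : ℝ) - (j : ℝ) := by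
    push_cast [Nat.cast_sub hjn]; ring
  have : (∑ t ∈ Finset.range (n - j), (t : ℝ)) = ((n - j : ℕ) : ℝ) * (((n - j : ℕ) : ℝ) - 1) / 2 := by
    induction (n - j) with
    | zero => simp
    | succ m ih => rw [Finset.sum_range_succ, ih]; push_cast; ring
  rw [this, hc]

lemma sum_max_fin (n : ℕ) (j : ℕ) (hj : j < n) :
    ∑ i : Fin n, max ((i : ℝ) - (j : ℝ)) 0
      = ((n : ℝ) - (j : ℝ)) * ((n : ℝ) - (j : ℝ) - 1) / 2 := by
  rw [← gauss_max n j hj, ← Fin.sum_univ_eq_sum_range (fun i => max ((i:ℝ) - (j:ℝ)) 0) n]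

lemma sum_max_split (n : ℕ) (u : Fin n → ℝ) (ℓ : ℝ) :
    ∑ i : Fin n, max (u i - ℓ) 0 = ∑ i ∈ univ.filter (fun i => ℓ < u i), (u i - ℓ) := by
  rw [← Finset.sum_filter_add_sum_filter_not univ (fun i => ℓ < u i)
    (fun i => max (u i - ℓ) 0)]
  have h1 : ∑ i ∈ univ.filter (fun i => ℓ < u i), max (u i - ℓ) 0
      = ∑ i ∈ univ.filter (fun i => ℓ < u i), (u i - ℓ) := by
    apply Finset.sum_congr rfl; intro i hi
    rw [mem_filter] at hi
    rw [max_eq_left (by linarith [hi.2])]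
  have h2 : ∑ i ∈ univ.filter (fun i => ¬ ℓ < u i), max (u i - ℓ) 0 = 0 := by
    apply Finset.sum_eq_zero; intro i hi
    rw [mem_filter] at hi
    rw [max_eq_right (by push_neg at hi; linarith [hi.2])]
  rw [h1, h2, add_zero]

/-- `|x|` is weakly sub-majorized by `(δ, 1+δ, …, n-1+δ)` iff for every threshold
`ℓ = j + δ` one has `∑ i max(|x i| - ℓ, 0) ≤ C(n - j, 2)`. -/
theorem weakSubMaj_iff_angle_sums
    (n : ℕ) (δ : ℝ) (hδ : δ = 0 ∨ δ = 1/2 ∨ δ = 1)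
    (x : Fin n → ℝ) (hsort : ∀ i j : Fin n, i ≤ j → |x i| ≤ |x j|) :
    WeakSubMaj (fun i => |x i|) (fun i : Fin n => (i : ℝ) + δ) ↔
      ∀ j : Fin n,
        ∑ i : Fin n, max (|x i| - ((j : ℝ) + δ)) 0
          ≤ ((n : ℝ) - (j : ℝ)) * ((n : ℝ) - (j : ℝ) - 1) / 2 := by
  constructor
  · intro h j
    set ℓ : ℝ := (j : ℝ) + δ with hℓ
    set A : Finset (Fin n) := univ.filter (fun i => ℓ < |x i|) with hA
    obtain ⟨T, hTcard, hle⟩ := h A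
    simp only at hle
    rw [sum_max_split n (fun i => |x i|) ℓ, ← hA, Finset.sum_sub_distrib,
      Finset.sum_const, nsmul_eq_mul]
    have step : ∑ i ∈ A, |x i| - A.card * ℓ ≤ ∑ i ∈ T, ((i : ℝ) + δ) - A.card * ℓ := by
      linarith [hle]
    refine le_trans step ?_
    have : ∑ i ∈ T, ((i : ℝ) - (j : ℝ)) = ∑ i ∈ T, ((i : ℝ) + δ) - A.card * ℓ := by
      rw [Finset.sum_sub_distrib, Finset.sum_add_distrib, Finset.sum_const, Finset.sum_const,
        nsmul_eq_mul, nsmul_eq_mul, hTcard, hℓ]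
      ring
    rw [← this]
    calc ∑ i ∈ T, ((i : ℝ) - (j : ℝ)) ≤ ∑ i ∈ T, max ((i : ℝ) - (j : ℝ)) 0 :=
          Finset.sum_le_sum (fun i _ => le_max_left _ _)
      _ ≤ ∑ i : Fin n, max ((i : ℝ) - (j : ℝ)) 0 :=
          Finset.sum_le_sum_of_subset_of_nonneg (Finset.subset_univ T)
            (fun i _ _ => le_max_right _ _)
      _ = ((n : ℝ) - (j : ℝ)) * ((n : ℝ) - (j : ℝ) - 1) / 2 := sum_max_fin n j j.isLt
  · intro h S
    set k := S.card with hk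
    have hkn : k ≤ n := by
      simpa using Finset.card_le_card (Finset.subset_univ S)
    rcases Nat.eq_zero_or_pos k with hk0 | hkpos
    · refine ⟨∅, by simp [← hk, hk0], ?_⟩
      have : S = ∅ := Finset.card_eq_zero.mp (by omega)
      simp [this]
    · have hjlt : n - k < n := by omega
      set j : Fin n := ⟨n - k, hjlt⟩ with hj
      set ℓ : ℝ := (j : ℝ) + δ with hℓ
      have hjr : (j : ℝ) = (n : ℝ) - (k : ℝ) := by
        have : (j : ℕ) = n - k := rfl
        rw [this, Nat.cast_sub hkn]
      have hmem : ∀ m ∈ Finset.Ico (n - k) n, m < n := fun m hm => (Finset.mem_Ico.mp hm).2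
      refine ⟨(Finset.Ico (n - k) n).attachFin hmem, ?_, ?_⟩
      · rw [Finset.card_attachFin, Nat.card_Ico]; omega
      · -- sum over T equals sum over Ico
        have hsumT : ∑ i ∈ (Finset.Ico (n - k) n).attachFin hmem, ((i : ℝ) + δ)
            = ∑ m ∈ Finset.Ico (n - k) n, ((m : ℝ) + δ) := by
          refine Finset.sum_nbij (fun i => (i : ℕ)) ?_ ?_ ?_ ?_
          · intro a ha; simpa [Finset.mem_attachFin] using ha
          · intro a _ b _ hab; exact Fin.val_injective hab
          · intro m hm
            have hm' : m ∈ Finset.Ico (n - k) n := by simpa using hm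
            exact ⟨⟨m, hmem m hm'⟩, by simp [Finset.mem_attachFin, hm']; have := Finset.mem_Ico.mp hm'; omega, rfl⟩
          · intro a _; rfl
        have hIco : ∑ m ∈ Finset.Ico (n - k) n, ((m : ℝ) + δ)
            = (k : ℝ) * ℓ + (k : ℝ) * ((k : ℝ) - 1) / 2 := by
          rw [Finset.sum_Ico_eq_sum_range]
          have hnk : n - (n - k) = k := by omega
          rw [hnk]
          have : ∀ t ∈ Finset.range k, (((n - k) + t : ℕ) : ℝ) + δ = (ℓ + (t : ℝ)) := by
            intro t _
            rw [hℓ, hjr]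
            push_cast [Nat.cast_sub hkn]
            ring
          rw [Finset.sum_congr rfl this, Finset.sum_add_distrib, Finset.sum_const,
            Finset.card_range, nsmul_eq_mul]
          have hsum : (∑ t ∈ Finset.range k, (t : ℝ)) = (k : ℝ) * ((k : ℝ) - 1) / 2 := by
            induction k with
            | zero => simp
            | succ m ih => rw [Finset.sum_range_succ, ih]; push_cast; ring
          rw [hsum]
        -- pointwise bound
        have hpt : ∑ i ∈ S, |x i| ≤ (k : ℝ) * ℓ + ∑ i ∈ S, max (|x i| - ℓ) 0 := by
          have : ∀ i ∈ S, |x i| ≤ ℓ + max (|x i| - ℓ) 0 := by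
            intro i _
            have := le_max_left (|x i| - ℓ) 0
            linarith
          calc ∑ i ∈ S, |x i| ≤ ∑ i ∈ S, (ℓ + max (|x i| - ℓ) 0) := Finset.sum_le_sum this
            _ = (k : ℝ) * ℓ + ∑ i ∈ S, max (|x i| - ℓ) 0 := by
              rw [Finset.sum_add_distrib, Finset.sum_const, nsmul_eq_mul, hk]
        have hsub : ∑ i ∈ S, max (|x i| - ℓ) 0 ≤ ∑ i : Fin n, max (|x i| - ℓ) 0 :=
          Finset.sum_le_sum_of_subset_of_nonneg (Finset.subset_univ S)
            (fun i _ _ => le_max_right _ _)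
        have hbound := h j
        have hcast : ((n : ℝ) - (j : ℝ)) = (k : ℝ) := by rw [hjr]; ring
        rw [hcast] at hbound
        simp only
        rw [hsumT, hIco]
        calc ∑ i ∈ S, |x i| ≤ (k : ℝ) * ℓ + ∑ i ∈ S, max (|x i| - ℓ) 0 := hpt
          _ ≤ (k : ℝ) * ℓ + ∑ i : Fin n, max (|x i| - ℓ) 0 := by linarith
          _ ≤ (k : ℝ) * ℓ + (k : ℝ) * ((k : ℝ) - 1) / 2 := by rw [hℓ]; linarith
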